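/- For every natural number n ≥ 0 and every integer n₀, the (n+1)×(n+1) integer matrix M(n, n₀) whose entry in row s (for s = 0, 1, …, n, rows in increasing order of s) and column indexed by g (for g = n₀−n, n₀−n+1, …, n₀, columns in increasing order of g) is the generalized binomial coefficient C(g+s−1, s) has determinant exactly 1. -/

import Mathlib

open Polynomial Matrix

/-- The binomial polynomial `x ↦ C(x + s - 1, s)` over `ℚ`. -/
noncomputable def binPoly (s : ℕ) : ℚ[X] :=
  ((s.factorial : ℚ))⁻¹ • ((descPochhammer ℚ s).comp (X + C ((s : ℚ) - 1)))

lemma binPoly_natDegree (s : ℕ) : (binPoly s).natDegree = s := by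
  have hne : ((s.factorial : ℚ))⁻¹ ≠ 0 :=
    inv_ne_zero (Nat.cast_ne_zero.mpr s.factorial_ne_zero)
  rw [binPoly, smul_eq_C_mul, natDegree_C_mul hne, natDegree_comp,
    descPochhammer_natDegree, natDegree_X_add_C, mul_one]

lemma binPoly_coeff_self (s : ℕ) : (binPoly s).coeff s = ((s.factorial : ℚ))⁻¹ := by
  have h1 : ((descPochhammer ℚ s).comp (X + C ((s : ℚ) - 1))).natDegree = s := by
    rw [natDegree_comp, descPochhammer_natDegree, natDegree_X_add_C, mul_one]
  have h2 : ((descPochhammer ℚ s).comp (X + C ((s : ℚ) - 1))).Monic := by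
    simpa using (monic_descPochhammer ℚ s).comp_X_add_C ((s : ℚ) - 1)
  have h3 : ((descPochhammer ℚ s).comp (X + C ((s : ℚ) - 1))).coeff s = 1 := by
    have := h2.leadingCoeff
    rwa [leadingCoeff, h1] at this
  unfold binPoly
  rw [coeff_smul, h3]; simp

lemma binPoly_eval (s : ℕ) (x : ℤ) :
    (binPoly s).eval (x : ℚ) = ((Ring.choose (x + (s : ℤ) - 1) s : ℤ) : ℚ) := by
  unfold binPoly
  rw [eval_smul, eval_comp]
  have hx : Polynomial.eval (x : ℚ) (X + C ((s : ℚ) - 1)) = (((x + (s : ℤ) - 1 : ℤ)) : ℚ) := by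
    push_cast; simp; ring
  rw [hx]
  have hZ : (descPochhammer ℤ s).eval (x + (s : ℤ) - 1)
      = (s.factorial : ℤ) * Ring.choose (x + (s : ℤ) - 1) s := by
    rw [Polynomial.eval_eq_smeval, Ring.descPochhammer_eq_factorial_smul_choose]
    simp [nsmul_eq_mul]
  rw [← descPochhammer_eval_cast (R := ℚ) s (x + (s : ℤ) - 1), hZ]
  push_cast
  rw [smul_eq_mul, ← mul_assoc, inv_mul_cancel₀ (by positivity), one_mul]

lemma superFactorial_ne_zero : ∀ n : ℕ, Nat.superFactorial n ≠ 0
  | 0 => one_ne_zero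
  | (m + 1) => by
    rw [Nat.superFactorial_succ]
    exact mul_ne_zero m.succ.factorial_ne_zero (superFactorial_ne_zero m)

/-- The `(n+1) × (n+1)` integer matrix `M(n, n₀)` with entries
`b_{s,g} = C(g+s-1, s)` (generalized binomial coefficient,
`C(x,s) = x(x-1)⋯(x-s+1)/s!`), where `0 ≤ s ≤ n` indexes the rows and
`g = n₀-n, …, n₀` indexes the columns (both in increasing order),
has determinant `1`. -/
theorem det_binomial_matrix (n : ℕ) (n₀ : ℤ) :
    Matrix.det (fun s j : Fin (n + 1) =>
      Ring.choose ((n₀ - (n : ℤ) + (j : ℤ)) + (s : ℤ) - 1) (s : ℕ)) = 1 := by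
  set M : Matrix (Fin (n + 1)) (Fin (n + 1)) ℤ := fun s j =>
    Ring.choose ((n₀ - (n : ℤ) + (j : ℤ)) + (s : ℤ) - 1) (s : ℕ) with hM
  apply (Int.cast_injective (α := ℚ))
  rw [Int.cast_one]
  refine Eq.trans (RingHom.map_det (Int.castRingHom ℚ) M) ?_
  set v : Fin (n + 1) → ℚ := fun i => (i : ℚ) + ((n₀ : ℚ) - (n : ℚ)) with hv
  have hentry : (Int.castRingHom ℚ).mapMatrix M
      = (Matrix.of (fun i j : Fin (n + 1) => (binPoly (j : ℕ)).eval (v i)))ᵀ := by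
    ext s j
    have hvj : v j = ((n₀ - (n : ℤ) + (j : ℤ) : ℤ) : ℚ) := by
      simp only [hv]; push_cast; ring
    simp only [RingHom.mapMatrix_apply, Matrix.map_apply, Matrix.transpose_apply,
      Matrix.of_apply, eq_intCast, hvj, binPoly_eval, hM]
    rfl
  rw [hentry, Matrix.det_transpose]
  rw [Matrix.eval_matrixOfPolynomials_eq_vandermonde_mul_matrixOfPolynomials v
      (fun j => binPoly (j : ℕ)) (fun i => le_of_eq (binPoly_natDegree (i : ℕ)))]
  rw [Matrix.det_mul]
  have hvd : (Matrix.vandermonde v).det = (Nat.superFactorial n : ℚ) := by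
    rw [hv, Matrix.det_vandermonde_add (fun i : Fin (n + 1) => (i : ℚ)) ((n₀ : ℚ) - (n : ℚ))]
    exact Matrix.det_vandermonde_id_eq_superFactorial n
  have htri : (Matrix.of (fun i j : Fin (n + 1) => (binPoly (j : ℕ)).coeff i)).det
      = ∏ i : Fin (n + 1), (((i : ℕ).factorial : ℚ))⁻¹ := by
    rw [Matrix.det_of_upperTriangular]
    · exact Finset.prod_congr rfl fun i _ => binPoly_coeff_self (i : ℕ)
    · intro i j hji
      simp only [Matrix.of_apply]
      apply Polynomial.coeff_eq_zero_of_natDegree_lt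
      rw [binPoly_natDegree]
      exact_mod_cast hji
  have hprod : ∏ i : Fin (n + 1), (((i : ℕ).factorial : ℚ))⁻¹
      = ((Nat.superFactorial n : ℚ))⁻¹ := by
    rw [Finset.prod_inv_distrib]
    congr 1
    rw [Fin.prod_univ_eq_prod_range (fun i => ((i.factorial : ℚ)))]
    rw_mod_cast [Nat.prod_range_succ_factorial n]
  have hsf : Nat.superFactorial n ≠ 0 := superFactorial_ne_zero n
  rw [hvd, htri, hprod, mul_inv_cancel₀ (Nat.cast_ne_zero.mpr hsf)]
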